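/- Linear convergence of HNAG: Let f be differentiable, μ-strongly convex, and L-smooth with minimizer x⋆, and let κ = L/μ. With α = √(2μ/L) and β = 1/(Lα), the HNAG iterates satisfy E(x_{k+1}, y_{k+1}) − (1/(2L))‖∇f(x_{k+1})‖² ≤ (1 + √(2/κ))^{-1} (E(x_k, y_k) − (1/(2L))‖∇f(x_k)‖²), where E(x,y) = f(x) − f(x⋆) + (μ/2)‖y − x⋆‖². -/

import Mathlib

set_option maxHeartbeats 1000000

open RealInnerProductSpace

theorem descent_lemma' {E : Type*} [NormedAddCommGroup E] [InnerProductSpace ℝ E]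
    [CompleteSpace E] (f : E → ℝ) (f' : E → E) (L : ℝ)
    (hf : ∀ x, HasGradientAt f (f' x) x)
    (hsmooth : ∀ x y, ‖f' x - f' y‖ ≤ L * ‖x - y‖) (x y : E) :
    f y ≤ f x + ⟪f' x, y - x⟫ + L / 2 * ‖y - x‖ ^ 2 := by
  set v := y - x with hv
  set g : ℝ → ℝ := fun t => f (x + t • v) - t * ⟪f' x, v⟫ - L / 2 * t ^ 2 * ‖v‖ ^ 2 with hg
  have hderiv : ∀ t : ℝ, HasDerivAt g (⟪f' (x + t • v), v⟫ - ⟪f' x, v⟫ - L * t * ‖v‖ ^ 2) t := by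
    intro t
    have hpath : HasDerivAt (fun t : ℝ => x + t • v) v t := by
      simpa using ((hasDerivAt_id t).smul_const v).const_add x
    have h1 : HasDerivAt (fun t : ℝ => f (x + t • v)) ⟪f' (x + t • v), v⟫ t := by
      have := ((hf (x + t • v)).hasFDerivAt.comp_hasDerivAt t hpath)
      simp at this
      exact this
    have h2 : HasDerivAt (fun t : ℝ => t * ⟪f' x, v⟫) ⟪f' x, v⟫ t := by
      simpa using (hasDerivAt_id t).mul_const (⟪f' x, v⟫)
    have h3 := ((hasDerivAt_pow 2 t).const_mul (L / 2)).mul_const (‖v‖ ^ 2)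
    have h3' : HasDerivAt (fun t : ℝ => L / 2 * t ^ 2 * ‖v‖ ^ 2) (L * t * ‖v‖ ^ 2) t := by
      exact h3.congr_deriv (by rw [show (2:ℕ) - 1 = 1 from rfl]; push_cast; ring)
    exact (h1.sub h2).sub h3'
  have hmono : AntitoneOn g (Set.Icc (0:ℝ) 1) := by
    apply antitoneOn_of_deriv_nonpos (convex_Icc 0 1)
    · exact fun t _ => ((hderiv t).continuousAt).continuousWithinAt
    · exact fun t _ => ((hderiv t).differentiableAt).differentiableWithinAt
    · intro t ht
      rw [interior_Icc] at ht
      rw [(hderiv t).deriv]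
      have h1 : ⟪f' (x + t • v) - f' x, v⟫ ≤ ‖f' (x + t • v) - f' x‖ * ‖v‖ :=
        real_inner_le_norm _ _
      have h2 : ‖f' (x + t • v) - f' x‖ ≤ L * ‖t • v‖ := by
        simpa using hsmooth (x + t • v) x
      have h3 : ‖t • v‖ = t * ‖v‖ := by
        rw [norm_smul, Real.norm_eq_abs, abs_of_pos ht.1]
      have h4 : ⟪f' (x + t • v) - f' x, v⟫ = ⟪f' (x + t • v), v⟫ - ⟪f' x, v⟫ :=
        inner_sub_left _ _ _
      rw [h3] at h2
      have h5 := mul_le_mul_of_nonneg_right h2 (norm_nonneg v)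
      nlinarith [h1, h4, h5]
  have h01 := hmono (Set.left_mem_Icc.2 zero_le_one) (Set.right_mem_Icc.2 zero_le_one) zero_le_one
  simp only [hg] at h01
  simp at h01
  have hxy : x + v = y := by rw [hv]; abel
  rw [hxy] at h01
  linarith

theorem hnag_linear_convergence {E : Type*} [NormedAddCommGroup E] [InnerProductSpace ℝ E]
    [CompleteSpace E] (f : E → ℝ) (f' : E → E) (μ L : ℝ)
    (hμ : 0 < μ) (hμL : μ ≤ L)
    (hf : ∀ x, HasGradientAt f (f' x) x)
    (hsc : ∀ x y, f x - f y - ⟪f' y, x - y⟫ ≥ μ / 2 * ‖x - y‖ ^ 2)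
    (hsmooth : ∀ x y, ‖f' x - f' y‖ ≤ L * ‖x - y‖)
    (xs : E) (hcrit : f' xs = 0)
    (α β : ℝ) (hα : α = Real.sqrt (2 * μ / L)) (hβ : β = 1 / (L * α))
    (xk yk xk1 yk1 : E)
    (hx : (1 / α) • (xk1 - xk) = yk - xk1 - β • f' xk)
    (hy : (1 / α) • (yk1 - yk) = xk1 - yk1 - (1 / μ) • f' xk1) :
    (f xk1 - f xs + μ / 2 * ‖yk1 - xs‖ ^ 2) - 1 / (2 * L) * ‖f' xk1‖ ^ 2
      ≤ (1 + Real.sqrt (2 / (L / μ)))⁻¹ *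
        ((f xk - f xs + μ / 2 * ‖yk - xs‖ ^ 2) - 1 / (2 * L) * ‖f' xk‖ ^ 2) := by
  have hL : 0 < L := lt_of_lt_of_le hμ hμL
  have hαpos : 0 < α := by
    rw [hα]
    exact Real.sqrt_pos.2 (by positivity)
  have hα2 : α ^ 2 = 2 * μ / L := by
    rw [hα]
    exact Real.sq_sqrt (by positivity)
  have hμ2 : μ = L * α ^ 2 / 2 := by
    rw [hα2]; field_simp
  -- rewrite the sqrt in the goal
  have hsqrt : Real.sqrt (2 / (L / μ)) = α := by
    rw [hα, div_div_eq_mul_div]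
  rw [hsqrt]
  -- vector form of the iteration
  have hxv : xk1 - xk = α • (yk - xk1 - β • f' xk) := by
    rw [← hx, smul_smul]
    rw [mul_one_div, div_self hαpos.ne', one_smul]
  have hyv : yk1 - yk = α • (xk1 - yk1 - (1 / μ) • f' xk1) := by
    rw [← hy, smul_smul]
    rw [mul_one_div, div_self hαpos.ne', one_smul]
  -- expressions for xk - xk1 and yk - xs
  have hx0 : xk - xk1 = (α * (1 + α)) • (xk1 - yk1) - (α ^ 2 / μ) • f' xk1
      + (α * β) • f' xk := by
    linear_combination (norm := module) (-1 : ℝ) • hxv + α • hyv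
  have hyk : yk - xs = (xk1 - xs) - (1 + α) • (xk1 - yk1) + (α / μ) • f' xk1 := by
    linear_combination (norm := module) (-1 : ℝ) • hyv
  have hyk1 : yk1 - xs = (xk1 - xs) - (xk1 - yk1) := by abel
  -- interpolation inequality (A)
  have hA : f xk - f xk1 - ⟪f' xk1, xk - xk1⟫ ≥ 1 / (2 * L) * ‖f' xk - f' xk1‖ ^ 2 := by
    set z := xk - (1 / L) • (f' xk - f' xk1) with hz
    have h1 := hsc z xk1
    have h2 := descent_lemma' f f' L hf hsmooth xk z
    have e1 : z - xk = -((1 / L) • (f' xk - f' xk1)) := by rw [hz]; abel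
    have e2 : ⟪f' xk, z - xk⟫ = -(1 / L * ⟪f' xk, f' xk - f' xk1⟫) := by
      rw [e1, inner_neg_right, real_inner_smul_right]
    have e3 : L / 2 * ‖z - xk‖ ^ 2 = 1 / (2 * L) * ‖f' xk - f' xk1‖ ^ 2 := by
      rw [e1, norm_neg, norm_smul, mul_pow, Real.norm_eq_abs, sq_abs]
      field_simp
    have e4 : ⟪f' xk1, z - xk1⟫ = ⟪f' xk1, xk - xk1⟫ - 1 / L * ⟪f' xk1, f' xk - f' xk1⟫ := by
      have hzz : z - xk1 = (xk - xk1) - (1 / L) • (f' xk - f' xk1) := by rw [hz]; abel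
      rw [hzz, inner_sub_right, real_inner_smul_right]
    have e5 : ⟪f' xk, f' xk - f' xk1⟫ - ⟪f' xk1, f' xk - f' xk1⟫ = ‖f' xk - f' xk1‖ ^ 2 := by
      rw [← inner_sub_left]
      exact real_inner_self_eq_norm_sq _
    have h1' : f z - f xk1 - ⟪f' xk1, z - xk1⟫ ≥ 0 :=
      le_trans (by positivity) h1
    rw [e4] at h1'
    rw [e2] at h2
    have hgoal : f xk - f xk1 - ⟪f' xk1, xk - xk1⟫
        ≥ 1 / L * ‖f' xk - f' xk1‖ ^ 2 - 1 / (2 * L) * ‖f' xk - f' xk1‖ ^ 2 := by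
      have hcomb : 1 / L * ⟪f' xk, f' xk - f' xk1⟫ - 1 / L * ⟪f' xk1, f' xk - f' xk1⟫
          = 1 / L * ‖f' xk - f' xk1‖ ^ 2 := by rw [← mul_sub, e5]
      linarith [h1', h2, e3 ▸ h2, hcomb]
    have : 1 / L * ‖f' xk - f' xk1‖ ^ 2 - 1 / (2 * L) * ‖f' xk - f' xk1‖ ^ 2
        = 1 / (2 * L) * ‖f' xk - f' xk1‖ ^ 2 := by field_simp; ring
    linarith [hgoal]
  -- strong convexity at xs (B)
  have hB : f xk1 - f xs ≤ ⟪f' xk1, xk1 - xs⟫ - μ / 2 * ‖xs - xk1‖ ^ 2 := by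
    have h := hsc xs xk1
    have hsw : ⟪f' xk1, xs - xk1⟫ = -⟪f' xk1, xk1 - xs⟫ := by
      rw [← neg_sub xk1 xs, inner_neg_right]
    rw [hsw] at h
    linarith
  -- the key algebraic identity
  have hId : α * ⟪f' xk1, xk1 - xs⟫ - α * (μ / 2 * ‖xs - xk1‖ ^ 2)
      + (1 + α) * (μ / 2 * ‖yk1 - xs‖ ^ 2) - (1 + α) * (1 / (2 * L) * ‖f' xk1‖ ^ 2)
      - ⟪f' xk1, xk - xk1⟫ - 1 / (2 * L) * ‖f' xk - f' xk1‖ ^ 2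
      - μ / 2 * ‖yk - xs‖ ^ 2 + 1 / (2 * L) * ‖f' xk‖ ^ 2
      = -(α / (2 * L) * ‖f' xk1‖ ^ 2) - μ * α * (1 + α) / 2 * ‖xk1 - yk1‖ ^ 2 := by
    rw [norm_sub_rev xs xk1, hx0, hyk, hyk1, hβ, hμ2]
    set u := xk1 - xs
    set A := xk1 - yk1
    set g0 := f' xk
    set g1 := f' xk1
    simp only [← real_inner_self_eq_norm_sq, inner_sub_left, inner_sub_right, inner_add_left,
      inner_add_right, real_inner_smul_left, real_inner_smul_right,
      real_inner_comm A u, real_inner_comm g0 u, real_inner_comm g1 u,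
      real_inner_comm g0 A, real_inner_comm g1 A, real_inner_comm g1 g0]
    field_simp
    ring
  -- combine everything
  have h1α : (0 : ℝ) < 1 + α := by linarith
  rw [le_inv_mul_iff₀ h1α]
  have hn1 : 0 ≤ α / (2 * L) * ‖f' xk1‖ ^ 2 := by positivity
  have hn2 : 0 ≤ μ * α * (1 + α) / 2 * ‖xk1 - yk1‖ ^ 2 := by positivity
  have hBprod : 0 ≤ α * (⟪f' xk1, xk1 - xs⟫ - μ / 2 * ‖xs - xk1‖ ^ 2 - (f xk1 - f xs)) :=
    mul_nonneg hαpos.le (by linarith)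
  nlinarith [hA, hBprod, hId, hn1, hn2]
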